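/- Let C be the set of transpositions in S_N (N ≥ 3) and let X ⊆ C be closed under conjugation by its own elements (aXa⁻¹ = X for all a ∈ X) with |X| ≥ (N−1)(N−2)/2. Then either X = C, or there exists i ∈ {1,...,N} such that X = {(jk) ∈ C : i ∉ {j,k}} (so |X| = (N−1)(N−2)/2). -/

import Mathlib

open Equiv

private lemma swap_eq_swap_aux {α : Type*} [DecidableEq α] {i j a b : α} (hij : i ≠ j)
    (h : Equiv.swap i j = Equiv.swap a b) :
    (i = a ∧ j = b) ∨ (i = b ∧ j = a) := by
  have h1 : Equiv.swap a b i = j := by rw [← h, Equiv.swap_apply_left]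
  rcases eq_or_ne i a with rfl | hia
  · rw [Equiv.swap_apply_left] at h1
    exact Or.inl ⟨rfl, h1.symm⟩
  rcases eq_or_ne i b with rfl | hib
  · rw [Equiv.swap_apply_right] at h1
    exact Or.inr ⟨rfl, h1.symm⟩
  · rw [Equiv.swap_apply_of_ne_of_ne hia hib] at h1
    exact absurd h1 hij

/-- A subset `X` of the transpositions of `S_N` (`N ≥ 3`), closed under
conjugation by its own elements and of cardinality at least `(N−1)(N−2)/2`, is
either all of `C` or the set of transpositions avoiding some fixed point `i`
(in which case `|X| = (N−1)(N−2)/2`). -/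
theorem stmt_10 (N : ℕ) (hN : 3 ≤ N) (X : Set (Perm (Fin N)))
    (hXC : ∀ a ∈ X, a.IsSwap)
    (hX : ∀ a ∈ X, ∀ b ∈ X, a * b * a⁻¹ ∈ X)
    (hcard : (N - 1) * (N - 2) / 2 ≤ X.ncard) :
    X = {σ : Perm (Fin N) | σ.IsSwap} ∨
      ∃ i : Fin N, X = {σ : Perm (Fin N) | σ.IsSwap ∧ σ i = i} ∧
        X.ncard = (N - 1) * (N - 2) / 2 := by
  classical
  -- elements of `X` are swaps of distinct points
  have hne : ∀ a b : Fin N, Equiv.swap a b ∈ X → a ≠ b := by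
    rintro a b hmem rfl
    obtain ⟨x, y, hxy, hx⟩ := hXC _ hmem
    rcases swap_eq_swap_aux hxy hx.symm with ⟨rfl, rfl⟩ | ⟨rfl, rfl⟩ <;> exact hxy rfl
  -- transitivity: the graph of `X` is a union of cliques
  have htrans : ∀ a b c : Fin N, a ≠ c → Equiv.swap a b ∈ X → Equiv.swap b c ∈ X →
      Equiv.swap a c ∈ X := by
    intro a b c hac hab hbc
    have hab' := hne _ _ hab
    have hbc' := hne _ _ hbc
    have := hX _ hab _ hbc
    have hconj : Equiv.swap a b * Equiv.swap b c * (Equiv.swap a b)⁻¹ = Equiv.swap a c := by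
      rw [← Equiv.swap_apply_apply]
      congr 1
      · exact Equiv.swap_apply_right a b
      · exact Equiv.swap_apply_of_ne_of_ne (Ne.symm hac) (Ne.symm hbc')
    rwa [hconj] at this
  -- symmetric membership
  have hsymm : ∀ a b : Fin N, Equiv.swap a b ∈ X → Equiv.swap b a ∈ X := by
    intro a b h; rwa [Equiv.swap_comm]
  -- degree function
  set d : Fin N → ℕ := fun i => (Finset.univ.filter fun j => Equiv.swap i j ∈ X).card with hd
  -- double counting: 2|X| = Σ d i
  have hXfin : X.Finite := Set.toFinite X
  set XF : Finset (Perm (Fin N)) := hXfin.toFinset with hXFdef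
  have hXFmem : ∀ σ, σ ∈ XF ↔ σ ∈ X := fun σ => Set.Finite.mem_toFinset _
  have hncard : X.ncard = XF.card := Set.ncard_eq_toFinset_card X hXfin
  set S : Finset (Fin N × Fin N) := Finset.univ.filter (fun p => Equiv.swap p.1 p.2 ∈ X)
    with hSdef
  have hSfst : S.card = ∑ i : Fin N, d i := by
    rw [Finset.card_eq_sum_card_fiberwise (f := Prod.fst) (t := Finset.univ)
      (fun x _ => Finset.mem_univ _)]
    refine Finset.sum_congr rfl fun i _ => ?_
    refine Finset.card_bij' (fun p _ => p.2) (fun j _ => (i, j)) ?_ ?_ ?_ ?_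
    · rintro ⟨x, y⟩ hp
      simp only [hSdef, Finset.mem_filter, Finset.mem_univ, true_and] at hp ⊢
      obtain ⟨h1, h2⟩ := hp
      subst h2; exact h1
    · intro j hj
      simp only [hd, Finset.mem_filter, Finset.mem_univ, true_and] at hj
      simp only [hSdef, Finset.mem_filter, Finset.mem_univ, true_and]
      exact ⟨hj, trivial⟩
    · rintro ⟨x, y⟩ hp
      simp only [hSdef, Finset.mem_filter, Finset.mem_univ, true_and] at hp
      obtain ⟨h1, h2⟩ := hp
      subst h2; rfl
    · intro j hj; rfl
  have hSswap : S.card = 2 * XF.card := by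
    rw [Finset.card_eq_sum_card_fiberwise (f := fun p => Equiv.swap p.1 p.2) (t := XF) ?_]
    · rw [Finset.sum_congr rfl (g := fun _ => 2) ?_, Finset.sum_const, smul_eq_mul, mul_comm]
      intro σ hσ
      have hσX : σ ∈ X := (hXFmem σ).1 hσ
      obtain ⟨a, b, hab, rfl⟩ := hXC σ hσX
      have : S.filter (fun p => Equiv.swap p.1 p.2 = Equiv.swap a b) = {(a, b), (b, a)} := by
        ext ⟨x, y⟩
        simp only [hSdef, Finset.mem_filter, Finset.mem_univ, true_and, Finset.mem_insert,
          Finset.mem_singleton, Prod.mk.injEq]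
        constructor
        · rintro ⟨hmem, heq⟩
          exact swap_eq_swap_aux (hne _ _ hmem) heq
        · rintro (⟨rfl, rfl⟩ | ⟨rfl, rfl⟩)
          · exact ⟨hσX, rfl⟩
          · exact ⟨hsymm _ _ hσX, Equiv.swap_comm _ _⟩
      rw [this, Finset.card_insert_of_notMem, Finset.card_singleton]
      simp only [Finset.mem_singleton, Prod.mk.injEq, not_and]
      intro h; exact absurd h hab
    · rintro ⟨x, y⟩ hp
      simp only [hSdef, Finset.mem_coe, Finset.mem_filter, Finset.mem_univ, true_and] at hp
      exact (hXFmem _).2 hp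
  have hkey : 2 * X.ncard = ∑ i : Fin N, d i := by
    rw [hncard, ← hSswap, hSfst]
  -- arithmetic facts
  have hMeq : N * (N - 3) + 2 = (N - 1) * (N - 2) := by
    obtain ⟨k, rfl⟩ : ∃ k, N = k + 3 := ⟨N - 3, by omega⟩
    have h1 : k + 3 - 1 = k + 2 := by omega
    have h2 : k + 3 - 2 = k + 1 := by omega
    have h3 : k + 3 - 3 = k := by omega
    rw [h1, h2, h3]; ring
  have hMeven : (N - 1) * (N - 2) % 2 = 0 := by
    rcases Nat.even_or_odd (N - 2) with h | h
    · exact Nat.even_iff.1 (Nat.even_mul.2 (Or.inr h))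
    · have he : Even (N - 1) := by
        have h1 := Odd.add_one h
        rwa [show N - 2 + 1 = N - 1 by omega] at h1
      exact Nat.even_iff.1 (Nat.even_mul.2 (Or.inl he))
  have hlow : (N - 1) * (N - 2) ≤ 2 * X.ncard := by
    generalize hM : (N - 1) * (N - 2) = M at hcard hMeven ⊢
    omega
  -- find a vertex of large degree
  obtain ⟨i, hi⟩ : ∃ i : Fin N, N - 2 ≤ d i := by
    by_contra hcon
    push_neg at hcon
    have hsum : ∑ i : Fin N, d i ≤ N * (N - 3) := by
      calc ∑ i : Fin N, d i ≤ ∑ _i : Fin N, (N - 3) :=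
            Finset.sum_le_sum (fun j _ => by have := hcon j; omega)
        _ = N * (N - 3) := by simp [Finset.card_univ, mul_comm]
    omega
  by_cases hbig : ∀ j : Fin N, j ≠ i → Equiv.swap i j ∈ X
  · -- X is everything
    left
    ext σ
    simp only [Set.mem_setOf_eq]
    constructor
    · exact hXC σ
    · rintro ⟨a, b, hab, rfl⟩
      rcases eq_or_ne a i with rfl | hai
      · exact hbig b (Ne.symm hab)
      rcases eq_or_ne b i with rfl | hbi
      · exact hsymm _ _ (hbig a (Ne.symm hab).symm)
      · exact htrans a i b hab (hsymm _ _ (hbig a hai)) (hbig b hbi)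
  · push_neg at hbig
    obtain ⟨m, hmi, hm⟩ := hbig
    -- the neighbourhood of i is exactly univ \ {i, m}
    have hAsub : (Finset.univ.filter fun j => Equiv.swap i j ∈ X) ⊆
        (Finset.univ.erase i).erase m := by
      intro j hj
      simp only [Finset.mem_filter, Finset.mem_univ, true_and] at hj
      refine Finset.mem_erase.2 ⟨?_, Finset.mem_erase.2 ⟨(hne _ _ hj).symm, Finset.mem_univ _⟩⟩
      rintro rfl; exact hm hj
    have hAcard : ((Finset.univ.erase i).erase m).card = N - 2 := by
      rw [Finset.card_erase_of_mem (Finset.mem_erase.2 ⟨hmi, Finset.mem_univ _⟩),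
        Finset.card_erase_of_mem (Finset.mem_univ _), Finset.card_univ, Fintype.card_fin]
      omega
    have hAeq : (Finset.univ.filter fun j => Equiv.swap i j ∈ X) =
        (Finset.univ.erase i).erase m :=
      Finset.eq_of_subset_of_card_le hAsub (by rw [hAcard]; exact hi)
    have hAc : ∀ j : Fin N, j ≠ i → j ≠ m → Equiv.swap i j ∈ X := by
      intro j hji hjm
      have : j ∈ (Finset.univ.erase i).erase m :=
        Finset.mem_erase.2 ⟨hjm, Finset.mem_erase.2 ⟨hji, Finset.mem_univ _⟩⟩
      rw [← hAeq] at this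
      exact (Finset.mem_filter.1 this).2
    -- no swap in X touches m
    have hnom : ∀ c : Fin N, Equiv.swap m c ∉ X := by
      intro c hmem
      have hcm : m ≠ c := hne _ _ hmem
      rcases eq_or_ne c i with rfl | hci
      · exact hm (hsymm _ _ hmem)
      · exact hm (htrans i c m (Ne.symm hmi) (hAc c hci (Ne.symm hcm)) (hsymm _ _ hmem))
    have hfix : ∀ σ ∈ X, σ m = m := by
      intro σ hσ
      obtain ⟨a, b, hab, rfl⟩ := hXC σ hσ
      have ham : a ≠ m := by rintro rfl; exact hnom b hσ
      have hbm : b ≠ m := by rintro rfl; exact hnom a (hsymm _ _ hσ)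
      exact Equiv.swap_apply_of_ne_of_ne (Ne.symm ham) (Ne.symm hbm)
    -- X is the set of swaps fixing m
    have hXeq : X = {σ : Perm (Fin N) | σ.IsSwap ∧ σ m = m} := by
      ext σ
      simp only [Set.mem_setOf_eq]
      constructor
      · intro hσ; exact ⟨hXC σ hσ, hfix σ hσ⟩
      · rintro ⟨⟨a, b, hab, rfl⟩, hfm⟩
        have ham : a ≠ m := by
          rintro rfl; rw [Equiv.swap_apply_left] at hfm; exact hab hfm.symm
        have hbm : b ≠ m := by
          rintro rfl; rw [Equiv.swap_apply_right] at hfm; exact hab hfm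
        rcases eq_or_ne a i with rfl | hai
        · exact hAc b (Ne.symm hab) hbm
        rcases eq_or_ne b i with rfl | hbi
        · exact hsymm _ _ (hAc a (Ne.symm hab).symm ham)
        · exact htrans a i b hab (hsymm _ _ (hAc a hai ham)) (hAc b hbi hbm)
    -- degree bounds give the cardinality
    have hdm : d m = 0 := by
      simp only [hd, Finset.card_eq_zero, Finset.filter_eq_empty_iff, Finset.mem_univ,
        forall_true_left]
      intro k; exact hnom k
    have hdle : ∀ j : Fin N, d j ≤ N - 2 := by
      intro j
      rcases eq_or_ne j m with rfl | hjm
      · omega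
      have hsub : (Finset.univ.filter fun k => Equiv.swap j k ∈ X) ⊆
          (Finset.univ.erase j).erase m := by
        intro k hk
        simp only [Finset.mem_filter, Finset.mem_univ, true_and] at hk
        refine Finset.mem_erase.2 ⟨?_, Finset.mem_erase.2 ⟨(hne _ _ hk).symm, Finset.mem_univ _⟩⟩
        rintro rfl; exact hnom j (hsymm _ _ hk)
      calc d j ≤ ((Finset.univ.erase j).erase m).card := Finset.card_le_card hsub
        _ = N - 2 := by
            rw [Finset.card_erase_of_mem (Finset.mem_erase.2 ⟨hjm.symm, Finset.mem_univ _⟩),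
              Finset.card_erase_of_mem (Finset.mem_univ _), Finset.card_univ, Fintype.card_fin]
            omega
    have hsumle : ∑ j : Fin N, d j ≤ (N - 1) * (N - 2) := by
      have h1 : ∑ j : Fin N, d j = ∑ j ∈ Finset.univ.erase m, d j := by
        rw [← Finset.sum_erase_add _ _ (Finset.mem_univ m), hdm, add_zero]
      rw [h1]
      calc ∑ j ∈ Finset.univ.erase m, d j ≤ ∑ _j ∈ Finset.univ.erase m, (N - 2) :=
            Finset.sum_le_sum (fun j _ => hdle j)
        _ = (N - 1) * (N - 2) := by
            rw [Finset.sum_const, smul_eq_mul, Finset.card_erase_of_mem (Finset.mem_univ _),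
              Finset.card_univ, Fintype.card_fin]
    have hfinal : X.ncard = (N - 1) * (N - 2) / 2 := by
      have h2 : 2 * X.ncard ≤ (N - 1) * (N - 2) := by rw [hkey]; exact hsumle
      generalize hM : (N - 1) * (N - 2) = M at h2 hlow hMeven ⊢
      omega
    exact Or.inr ⟨m, hXeq, hfinal⟩
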